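/- Let n ≥ 1 and set a_n = n + 2 − √(2(n+2)) and b_n = n + 2 + √(2(n+2)). Let Ω ⊆ E be a Lebesgue-measurable set and define the pairwise error probability as a function of the noise power, PEP(v) = ∫_{Ω} (2πv)^{−n/2} exp(−‖x‖²/(2v)) dx for v > 0. If Ω is disjoint from the open ball of radius d > 0 centered at the origin (i.e. ‖x‖ ≥ d for every x ∈ Ω), then PEP is convex on (0, d²/b_n]. If Ω ⊆ Metric.closedBall 0 R with R > 0, then PEP is convex on [R²/a_n, ∞). -/

import Mathlib

open MeasureTheory Real Set Filter

lemma aux_hasDerivAt₁ (m k v : ℝ) (hv : 0 < v) :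
    HasDerivAt (fun v => Real.exp (-m * Real.log v - k / v))
      (Real.exp (-m * Real.log v - k / v) * (k / v^2 - m / v)) v := by
  have hlog : HasDerivAt (fun v : ℝ => -m * Real.log v) (-m * v⁻¹) v :=
    (Real.hasDerivAt_log hv.ne').const_mul (-m)
  have hinv : HasDerivAt (fun v : ℝ => k * v⁻¹) (k * (-(v^2)⁻¹)) v :=
    (hasDerivAt_inv hv.ne').const_mul k
  have h1 : HasDerivAt (fun v : ℝ => -m * Real.log v - k / v) (k / v^2 - m / v) v := by
    have hfun : (fun v : ℝ => -m * Real.log v - k / v)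
        = fun v : ℝ => -m * Real.log v - k * v⁻¹ := by
      funext t; rw [div_eq_mul_inv]
    rw [hfun]
    refine (hlog.fun_sub hinv).congr_deriv ?_
    field_simp
    ring
  exact h1.exp

lemma aux_hasDerivAt₂ (m k v : ℝ) (hv : 0 < v) :
    HasDerivAt (fun v => Real.exp (-m * Real.log v - k / v) * (k / v^2 - m / v))
      (Real.exp (-m * Real.log v - k / v) *
        ((k / v^2 - m / v)^2 + (m / v^2 - 2*k / v^3))) v := by
  have hu : HasDerivAt (fun v : ℝ => k / v^2 - m / v) (m / v^2 - 2*k / v^3) v := by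
    have h2 : HasDerivAt (fun v : ℝ => k * (v^2)⁻¹)
        (k * (-(2 * v^1) / (v^2)^2)) v :=
      (((hasDerivAt_pow 2 v)).inv (pow_ne_zero 2 hv.ne')).const_mul k
    have h3 : HasDerivAt (fun v : ℝ => m * v⁻¹) (m * (-(v^2)⁻¹)) v :=
      (hasDerivAt_inv hv.ne').const_mul m
    have hfun : (fun v : ℝ => k / v^2 - m / v)
        = fun v : ℝ => k * (v^2)⁻¹ - m * v⁻¹ := by
      funext t; rw [div_eq_mul_inv, div_eq_mul_inv]
    rw [hfun]
    refine (h2.fun_sub h3).congr_deriv ?_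
    field_simp
    ring
  refine ((aux_hasDerivAt₁ m k v hv).fun_mul hu).congr_deriv ?_
  ring

lemma convexOn_congr {s : Set ℝ} {f g : ℝ → ℝ} (h : ConvexOn ℝ s f)
    (he : ∀ x ∈ s, f x = g x) : ConvexOn ℝ s g :=
  ⟨h.1, fun x hx y hy a b ha hb hab => by
    rw [← he _ (h.1 hx hy ha hb hab), ← he _ hx, ← he _ hy]
    exact h.2 hx hy ha hb hab⟩

lemma gaussScalar_convexOn (m k : ℝ) (S : Set ℝ) (hS : Convex ℝ S) (hpos : S ⊆ Ioi 0)
    (hQ : ∀ v ∈ interior S, 0 ≤ m*(m+1)*v^2 - 2*k*(m+1)*v + k^2) :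
    ConvexOn ℝ S (fun v => Real.exp (-m * Real.log v - k / v)) := by
  set f : ℝ → ℝ := fun v => Real.exp (-m * Real.log v - k / v) with hf
  set g : ℝ → ℝ := fun v => Real.exp (-m * Real.log v - k / v) * (k / v^2 - m / v) with hg
  have hderiv : ∀ v ∈ Ioi (0:ℝ), deriv f v = g v := fun v hv =>
    (aux_hasDerivAt₁ m k v hv).deriv
  have key : ∀ x ∈ interior S, HasDerivAt (deriv f)
      (Real.exp (-m * Real.log x - k / x) *
        ((k / x^2 - m / x)^2 + (m / x^2 - 2*k / x^3))) x := by
    intro x hx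
    have hx0 : (0:ℝ) < x := hpos (interior_subset hx)
    have ev : deriv f =ᶠ[nhds x] g :=
      Filter.eventuallyEq_of_mem (isOpen_Ioi.mem_nhds hx0) hderiv
    exact (aux_hasDerivAt₂ m k x hx0).congr_of_eventuallyEq ev
  apply convexOn_of_deriv2_nonneg hS
  · exact fun v hv =>
      ((aux_hasDerivAt₁ m k v (hpos hv)).differentiableAt).continuousAt.continuousWithinAt
  · exact fun v hv =>
      ((aux_hasDerivAt₁ m k v (hpos (interior_subset hv))).differentiableAt).differentiableWithinAt
  · exact fun v hv => (key v hv).differentiableAt.differentiableWithinAt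
  · intro x hx
    have hx0 : (0:ℝ) < x := hpos (interior_subset hx)
    show 0 ≤ deriv (deriv f) x
    rw [(key x hx).deriv]
    have heq : (k / x^2 - m / x)^2 + (m / x^2 - 2*k / x^3)
        = (m*(m+1)*x^2 - 2*k*(m+1)*x + k^2) / x^4 := by
      field_simp
      ring
    exact mul_nonneg (Real.exp_pos _).le
      (heq ▸ div_nonneg (hQ x hx) (by positivity))

lemma gauss_convexOn (n : ℕ) (c : ℝ) (S : Set ℝ) (hS : Convex ℝ S) (hpos : S ⊆ Ioi 0)
    (hQ : ∀ v ∈ interior S,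
      0 ≤ (n:ℝ)*((n:ℝ)+2)*v^2 - 2*c*((n:ℝ)+2)*v + c^2) :
    ConvexOn ℝ S (fun v => (2*π*v) ^ (-(n:ℝ)/2) * Real.exp (-c/(2*v))) := by
  have hQ' : ∀ v ∈ interior S,
      0 ≤ ((n:ℝ)/2)*(((n:ℝ)/2)+1)*v^2 - 2*(c/2)*(((n:ℝ)/2)+1)*v + (c/2)^2 := by
    intro v hv; nlinarith [hQ v hv]
  have base := gaussScalar_convexOn ((n:ℝ)/2) (c/2) S hS hpos hQ'
  have hsm := base.smul (c := (2*π) ^ (-(n:ℝ)/2)) (by positivity)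
  apply convexOn_congr hsm
  intro v hv
  have hv0 : (0:ℝ) < v := hpos hv
  have h1 : (2*π*v) ^ (-(n:ℝ)/2) = (2*π) ^ (-(n:ℝ)/2) * v ^ (-(n:ℝ)/2) :=
    Real.mul_rpow (by positivity) hv0.le
  have h2 : v ^ (-(n:ℝ)/2) = Real.exp (Real.log v * (-(n:ℝ)/2)) :=
    Real.rpow_def_of_pos hv0 _
  simp only [Pi.smul_apply, smul_eq_mul]
  rw [h1, h2, mul_assoc, ← Real.exp_add]
  congr 2
  ring

lemma convexOn_setIntegral {α : Type*} [MeasurableSpace α] {μ : Measure α}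
    {Ω : Set α} (hΩ : MeasurableSet Ω) {S : Set ℝ} (hS : Convex ℝ S)
    (g : ℝ → α → ℝ)
    (hconv : ∀ x ∈ Ω, ConvexOn ℝ S (fun v => g v x))
    (hint : ∀ v ∈ S, IntegrableOn (g v) Ω μ) :
    ConvexOn ℝ S (fun v => ∫ x in Ω, g v x ∂μ) := by
  refine ⟨hS, fun p hp q hq a b ha hb hab => ?_⟩
  have hpq : a • p + b • q ∈ S := hS hp hq ha hb hab
  have hle : ∫ x in Ω, g (a • p + b • q) x ∂μ
      ≤ ∫ x in Ω, (a * g p x + b * g q x) ∂μ := by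
    apply setIntegral_mono_on (hint _ hpq)
      (((hint p hp).const_mul a).add ((hint q hq).const_mul b)) hΩ
    intro x hx
    simpa [smul_eq_mul] using (hconv x hx).2 hp hq ha hb hab
  calc ∫ x in Ω, g (a • p + b • q) x ∂μ ≤ _ := hle
    _ = a • ∫ x in Ω, g p x ∂μ + b • ∫ x in Ω, g q x ∂μ := by
        rw [integral_add ((hint p hp).const_mul a) ((hint q hq).const_mul b),
          integral_const_mul, integral_const_mul]
        simp [smul_eq_mul]

lemma gauss_integrable (n : ℕ) (v : ℝ) (hv : 0 < v) (C : ℝ) :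
    Integrable (fun x : EuclideanSpace ℝ (Fin n) => C * Real.exp (-‖x‖^2 / (2*v))) := by
  have hb : (0:ℝ) < ((1/(2*v) : ℝ) : ℂ).re := by simp; positivity
  have h := (GaussianFourier.integrable_cexp_neg_mul_sq_norm_add
    (V := EuclideanSpace ℝ (Fin n)) hb 0 0).norm
  apply (h.const_mul C).congr
  filter_upwards with x
  rw [Complex.norm_exp]
  congr 2
  simp
  have : ((‖x‖:ℂ)^2).re = ‖x‖^2 := by norm_cast
  rw [this]; ring

/-- In the AWGN channel, the PEP as a function of the noise power
`v` is convex on `(0, d²/b_n]` when the region is at distance at least `d` from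
the origin, and convex on `[R²/a_n, ∞)` when the region is contained in the ball
of radius `R`, where `a_n = n+2-√(2(n+2))` and `b_n = n+2+√(2(n+2))`. -/
theorem pep_convexity_in_noise_power_awgn
    (n : ℕ) (hn : 1 ≤ n)
    (Ω : Set (EuclideanSpace ℝ (Fin n)))
    (hΩmeas : MeasurableSet Ω)
    (PEP : ℝ → ℝ)
    (hPEP : ∀ v, PEP v = ∫ x in Ω,
      (2 * π * v) ^ (-(n : ℝ) / 2) * Real.exp (-‖x‖ ^ 2 / (2 * v))) :
    (∀ d : ℝ, 0 < d → (∀ x ∈ Ω, d ≤ ‖x‖) →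
      ConvexOn ℝ
        (Ioc (0 : ℝ) (d ^ 2 / ((n : ℝ) + 2 + Real.sqrt (2 * ((n : ℝ) + 2)))))
        PEP) ∧
    (∀ R : ℝ, 0 < R →
      Ω ⊆ Metric.closedBall (0 : EuclideanSpace ℝ (Fin n)) R →
      ConvexOn ℝ
        (Ici (R ^ 2 / ((n : ℝ) + 2 - Real.sqrt (2 * ((n : ℝ) + 2)))))
        PEP) := by
  have hPEPfun : PEP = fun v => ∫ x in Ω,
      (2 * π * v) ^ (-(n : ℝ) / 2) * Real.exp (-‖x‖ ^ 2 / (2 * v)) := funext hPEP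
  set s : ℝ := Real.sqrt (2 * ((n : ℝ) + 2)) with hs_def
  have hs : 0 ≤ s := Real.sqrt_nonneg _
  have hs2 : s ^ 2 = 2 * ((n : ℝ) + 2) := Real.sq_sqrt (by positivity)
  have hn1 : (1:ℝ) ≤ (n:ℝ) := by exact_mod_cast hn
  have hslt : s < (n:ℝ) + 2 := by nlinarith [sq_nonneg (s - ((n:ℝ)+2))]
  have hbpos : 0 < (n:ℝ) + 2 + s := by positivity
  have hapos : 0 < (n:ℝ) + 2 - s := by linarith
  constructor
  · -- convexity on (0, d²/b_n]
    intro d hd hΩd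
    rw [hPEPfun]
    apply convexOn_setIntegral hΩmeas (convex_Ioc _ _)
    · intro x hx
      apply gauss_convexOn n (‖x‖^2) _ (convex_Ioc _ _) (fun v hv => hv.1)
      intro v hv
      rw [interior_Ioc] at hv
      obtain ⟨hv0, hvlt⟩ := hv
      have hvb : v * ((n:ℝ) + 2 + s) < d ^ 2 := (lt_div_iff₀ hbpos).mp hvlt
      have hdx : d ^ 2 ≤ ‖x‖ ^ 2 := by
        have := hΩd x hx
        nlinarith
      have e1 : 0 ≤ ‖x‖^2 - v * ((n:ℝ) + 2 + s) := by linarith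
      have e2 : 0 ≤ ‖x‖^2 - v * ((n:ℝ) + 2 - s) := by
        have := mul_nonneg hv0.le hs
        nlinarith
      have hfac : (n:ℝ)*((n:ℝ)+2)*v^2 - 2*(‖x‖^2)*((n:ℝ)+2)*v + (‖x‖^2)^2
          = (‖x‖^2 - v * ((n:ℝ) + 2 + s)) * (‖x‖^2 - v * ((n:ℝ) + 2 - s)) := by
        linear_combination (v^2) * hs2
      rw [hfac]
      exact mul_nonneg e1 e2
    · intro v hv
      exact (gauss_integrable n v hv.1 _).integrableOn
  · -- convexity on [R²/a_n, ∞)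
    intro R hR hΩR
    rw [hPEPfun]
    have hv0 : ∀ v ∈ Ici (R ^ 2 / ((n:ℝ) + 2 - s)), (0:ℝ) < v := by
      intro v hv
      have : 0 < R ^ 2 / ((n:ℝ) + 2 - s) := div_pos (by positivity) hapos
      linarith [mem_Ici.mp hv]
    apply convexOn_setIntegral hΩmeas (convex_Ici _)
    · intro x hx
      apply gauss_convexOn n (‖x‖^2) _ (convex_Ici _) (fun v hv => hv0 v hv)
      intro v hv
      rw [interior_Ici] at hv
      have hvp : 0 < v := hv0 v (mem_Ici.mpr (le_of_lt hv))
      have hva : R ^ 2 < v * ((n:ℝ) + 2 - s) := (div_lt_iff₀ hapos).mp hv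
      have hxR : ‖x‖ ^ 2 ≤ R ^ 2 := by
        have := mem_closedBall_zero_iff.mp (hΩR hx)
        nlinarith [norm_nonneg x]
      have e2 : 0 ≤ v * ((n:ℝ) + 2 - s) - ‖x‖^2 := by linarith
      have e1 : 0 ≤ v * ((n:ℝ) + 2 + s) - ‖x‖^2 := by
        have := mul_nonneg hvp.le hs
        nlinarith
      have hfac : (n:ℝ)*((n:ℝ)+2)*v^2 - 2*(‖x‖^2)*((n:ℝ)+2)*v + (‖x‖^2)^2
          = (v * ((n:ℝ) + 2 + s) - ‖x‖^2) * (v * ((n:ℝ) + 2 - s) - ‖x‖^2) := by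
        linear_combination (v^2) * hs2
      rw [hfac]
      exact mul_nonneg e1 e2
    · intro v hv
      exact (gauss_integrable n v (hv0 v hv) _).integrableOn
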